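/- Every saturated Ω-isolated compact invariant set of a flow on a compact metric space is isolated: if Λ is compact invariant, Ω(φ) \ Λ is closed, and W^s(Λ) ∩ W^u(Λ) = Λ, then there is a compact neighborhood U of Λ with ⋂_{t∈ℝ} φ(t, U) = Λ. -/

import Mathlib

open Filter Topology Metric Set

variable {M : Type*} [MetricSpace M]

/-- `φ` is a continuous flow on `M`. -/
def IsFlow (φ : ℝ → M → M) : Prop :=
  Continuous (fun p : ℝ × M => φ p.1 p.2) ∧ (∀ x, φ 0 x = x) ∧
    (∀ s t : ℝ, ∀ x, φ (s + t) x = φ s (φ t x))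

/-- The time-reversed flow. -/
def ReverseFlow (φ : ℝ → M → M) : ℝ → M → M := fun t x => φ (-t) x

/-- A compact set `A` is Lyapunov stable for `φ`. -/
def LyapStable (φ : ℝ → M → M) (A : Set M) : Prop :=
  IsCompact A ∧ ∀ U : Set M, IsOpen U → A ⊆ U →
    ∃ V : Set M, IsOpen V ∧ A ⊆ V ∧ ∀ t : ℝ, 0 ≤ t → φ t '' V ⊆ U

/-- The ω-limit set of `x`: accumulation points of `φ t x` as `t → +∞`. -/
def OmegaSet (φ : ℝ → M → M) (x : M) : Set M :=
  {y | ∃ u : ℕ → ℝ, Tendsto u atTop atTop ∧ Tendsto (fun n => φ (u n) x) atTop (𝓝 y)}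

/-- The α-limit set of `x`: accumulation points of `φ t x` as `t → -∞`. -/
def AlphaSet (φ : ℝ → M → M) (x : M) : Set M :=
  {y | ∃ u : ℕ → ℝ, Tendsto u atTop atBot ∧ Tendsto (fun n => φ (u n) x) atTop (𝓝 y)}

/-- The stable set of `Λ`. -/
def StableSet (φ : ℝ → M → M) (Λ : Set M) : Set M :=
  {x | Tendsto (fun t => infDist (φ t x) Λ) atTop (𝓝 0)}

/-- The unstable set of `Λ`. -/
def UnstableSet (φ : ℝ → M → M) (Λ : Set M) : Set M :=
  {x | Tendsto (fun t => infDist (φ t x) Λ) atBot (𝓝 0)}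

/-- `Λ` is invariant under the flow. -/
def IsInvariantSet (φ : ℝ → M → M) (Λ : Set M) : Prop := ∀ t : ℝ, φ t '' Λ = Λ

/-- `Γ` is a transitive set: compact, invariant, and equal to the ω-limit set of
one of its points. -/
def IsTransitiveSet (φ : ℝ → M → M) (Γ : Set M) : Prop :=
  IsCompact Γ ∧ IsInvariantSet φ Γ ∧ ∃ x ∈ Γ, OmegaSet φ x = Γ

/-- `Λ` is neutral: a compact invariant set which is the intersection of a Lyapunov
stable set for `φ` and a Lyapunov stable set for the reversed flow. -/
def IsNeutralSet (φ : ℝ → M → M) (Λ : Set M) : Prop :=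
  IsCompact Λ ∧ IsInvariantSet φ Λ ∧
    ∃ Λp Λm : Set M, LyapStable φ Λp ∧ LyapStable (ReverseFlow φ) Λm ∧ Λ = Λp ∩ Λm

/-- The nonwandering set of the flow. -/
def NonwanderingSet (φ : ℝ → M → M) : Set M :=
  {p | ∀ W : Set M, IsOpen W → p ∈ W → ∀ T : ℝ, 0 < T → ∃ t > T, (φ t '' W ∩ W).Nonempty}

/-- `Λ` is isolated: the maximal invariant set of some compact neighborhood. -/
def IsIsolatedSet (φ : ℝ → M → M) (Λ : Set M) : Prop :=
  ∃ U : Set M, IsCompact U ∧ Λ ⊆ interior U ∧ (⋂ t : ℝ, φ t '' U) = Λ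

/-- `Λ` is Ω-isolated: `Ω(φ) \ Λ` is closed. -/
def IsOmegaIsolatedSet (φ : ℝ → M → M) (Λ : Set M) : Prop :=
  IsClosed (NonwanderingSet φ \ Λ)


section Aux

variable {φ : ℝ → M → M} {Λ : Set M}

lemma omega_subset_nonwandering (hφ : IsFlow φ) (x : M) :
    OmegaSet φ x ⊆ NonwanderingSet φ := by
  obtain ⟨-, h0, hadd⟩ := hφ
  rintro y ⟨u, hu, hconv⟩ W hW hyW T hT
  have hev : ∀ᶠ n in atTop, φ (u n) x ∈ W := hconv (hW.mem_nhds hyW)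
  obtain ⟨n₀, hn₀⟩ := hev.exists
  obtain ⟨m, hm1, hm2⟩ := ((hu.eventually_gt_atTop (u n₀ + T)).and hev).exists
  refine ⟨u m - u n₀, by linarith, φ (u m) x, ⟨⟨φ (u n₀) x, hn₀, ?_⟩, hm2⟩⟩
  have h' : u m - u n₀ + u n₀ = u m := by ring
  rw [← hadd, h']

lemma alpha_subset_nonwandering (hφ : IsFlow φ) (x : M) :
    AlphaSet φ x ⊆ NonwanderingSet φ := by
  obtain ⟨-, h0, hadd⟩ := hφ
  rintro y ⟨u, hu, hconv⟩ W hW hyW T hT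
  have hev : ∀ᶠ n in atTop, φ (u n) x ∈ W := hconv (hW.mem_nhds hyW)
  obtain ⟨n₀, hn₀⟩ := hev.exists
  obtain ⟨m, hm1, hm2⟩ := ((hu.eventually_lt_atBot (u n₀ - T)).and hev).exists
  refine ⟨u n₀ - u m, by linarith, φ (u n₀) x, ⟨⟨φ (u m) x, hm2, ?_⟩, hn₀⟩⟩
  have h' : u n₀ - u m + u m = u n₀ := by ring
  rw [← hadd, h']

lemma omega_subset_closed {U : Set M} (hU : IsClosed U) {x : M}
    (horb : ∀ t : ℝ, φ t x ∈ U) : OmegaSet φ x ⊆ U := by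
  rintro y ⟨u, -, hconv⟩
  exact hU.mem_of_tendsto hconv (Eventually.of_forall fun n => horb (u n))

lemma alpha_subset_closed {U : Set M} (hU : IsClosed U) {x : M}
    (horb : ∀ t : ℝ, φ t x ∈ U) : AlphaSet φ x ⊆ U := by
  rintro y ⟨u, -, hconv⟩
  exact hU.mem_of_tendsto hconv (Eventually.of_forall fun n => horb (u n))

lemma omega_nonempty [CompactSpace M] (x : M) : (OmegaSet φ x).Nonempty := by
  obtain ⟨y, -, ψ, hψ, hconv⟩ := isCompact_univ.tendsto_subseq
    (fun n : ℕ => mem_univ (φ (n : ℝ) x))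
  exact ⟨y, fun n => ((ψ n : ℕ) : ℝ),
    tendsto_natCast_atTop_atTop.comp hψ.tendsto_atTop, hconv⟩

lemma alpha_nonempty [CompactSpace M] (x : M) : (AlphaSet φ x).Nonempty := by
  obtain ⟨y, -, ψ, hψ, hconv⟩ := isCompact_univ.tendsto_subseq
    (fun n : ℕ => mem_univ (φ (-(n : ℝ)) x))
  exact ⟨y, fun n => -((ψ n : ℕ) : ℝ),
    tendsto_neg_atTop_atBot.comp (tendsto_natCast_atTop_atTop.comp hψ.tendsto_atTop), hconv⟩

lemma stable_of_omega_subset [CompactSpace M] {x : M} (hΛ : OmegaSet φ x ⊆ Λ) :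
    Tendsto (fun t => infDist (φ t x) Λ) atTop (𝓝 0) := by
  by_contra h
  rw [Metric.tendsto_nhds] at h
  push_neg at h
  obtain ⟨ε, hε, hfreq⟩ := h
  simp only [← not_lt] at hfreq
  have hfreq' : ∀ n : ℕ, ∃ b ≥ (n : ℝ), ε ≤ infDist (φ b x) Λ := by
    intro n
    obtain ⟨b, hb, hb'⟩ := frequently_atTop.mp hfreq (n : ℝ)
    refine ⟨b, hb, ?_⟩
    rw [not_lt, dist_zero_right, Real.norm_of_nonneg infDist_nonneg] at hb'
    exact hb'
  choose t ht hεt using hfreq'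
  have htt : Tendsto t atTop atTop := tendsto_atTop_mono ht tendsto_natCast_atTop_atTop
  obtain ⟨y, -, ψ, hψ, hconv⟩ := isCompact_univ.tendsto_subseq
    (fun n : ℕ => mem_univ (φ (t n) x))
  have hyΛ : y ∈ Λ := hΛ ⟨t ∘ ψ, htt.comp hψ.tendsto_atTop, hconv⟩
  have h0 : Tendsto (fun n => infDist (φ (t (ψ n)) x) Λ) atTop (𝓝 0) := by
    have := ((continuous_infDist_pt Λ).tendsto y).comp hconv
    rwa [infDist_zero_of_mem hyΛ] at this
  have : ε ≤ 0 := ge_of_tendsto h0 (Eventually.of_forall fun n => hεt (ψ n))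
  linarith

lemma unstable_of_alpha_subset [CompactSpace M] {x : M} (hΛ : AlphaSet φ x ⊆ Λ) :
    Tendsto (fun t => infDist (φ t x) Λ) atBot (𝓝 0) := by
  by_contra h
  rw [Metric.tendsto_nhds] at h
  push_neg at h
  obtain ⟨ε, hε, hfreq⟩ := h
  simp only [← not_lt] at hfreq
  have hfreq' : ∀ n : ℕ, ∃ b ≤ -(n : ℝ), ε ≤ infDist (φ b x) Λ := by
    intro n
    obtain ⟨b, hb, hb'⟩ := frequently_atBot.mp hfreq (-(n : ℝ))
    refine ⟨b, hb, ?_⟩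
    rw [not_lt, dist_zero_right, Real.norm_of_nonneg infDist_nonneg] at hb'
    exact hb'
  choose t ht hεt using hfreq'
  have htt : Tendsto t atTop atBot := tendsto_atBot_mono ht
    (tendsto_neg_atTop_atBot.comp tendsto_natCast_atTop_atTop)
  obtain ⟨y, -, ψ, hψ, hconv⟩ := isCompact_univ.tendsto_subseq
    (fun n : ℕ => mem_univ (φ (t n) x))
  have hyΛ : y ∈ Λ := hΛ ⟨t ∘ ψ, htt.comp hψ.tendsto_atTop, hconv⟩
  have h0 : Tendsto (fun n => infDist (φ (t (ψ n)) x) Λ) atTop (𝓝 0) := by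
    have := ((continuous_infDist_pt Λ).tendsto y).comp hconv
    rwa [infDist_zero_of_mem hyΛ] at this
  have : ε ≤ 0 := ge_of_tendsto h0 (Eventually.of_forall fun n => hεt (ψ n))
  linarith

end Aux

theorem saturated_omega_isolated_is_isolated [CompactSpace M] (φ : ℝ → M → M)
    (hφ : IsFlow φ) (Λ : Set M) (hcomp : IsCompact Λ) (hinv : IsInvariantSet φ Λ)
    (hΩ : IsOmegaIsolatedSet φ Λ)
    (hsat : StableSet φ Λ ∩ UnstableSet φ Λ = Λ) :
    IsIsolatedSet φ Λ := by
  obtain ⟨hc, h0, hadd⟩ := hφ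
  have hK : IsClosed (NonwanderingSet φ \ Λ) := hΩ
  have hsub : Λ ⊆ (NonwanderingSet φ \ Λ)ᶜ := fun z hz hz' => hz'.2 hz
  obtain ⟨δ, hδ, hUsub⟩ := hcomp.exists_cthickening_subset_open hK.isOpen_compl hsub
  refine ⟨cthickening δ Λ, (isClosed_cthickening).isCompact, ?_, ?_⟩
  · exact (self_subset_thickening hδ Λ).trans
      (interior_maximal (thickening_subset_cthickening δ Λ) isOpen_thickening)
  · apply Set.Subset.antisymm
    · intro x hx
      simp only [mem_iInter] at hx
      -- the whole orbit of x lies in U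
      have horb : ∀ s : ℝ, φ s x ∈ cthickening δ Λ := by
        intro s
        obtain ⟨u, hu, hux⟩ := hx (-s)
        have : φ s x = u := by
          rw [← hux, ← hadd]
          simp [h0]
        rwa [this]
      -- limit sets are inside Λ
      have hsubΛ : ∀ y : M, y ∈ NonwanderingSet φ → y ∈ cthickening δ Λ → y ∈ Λ := by
        intro y hy hyU
        by_contra hyΛ
        exact hUsub hyU ⟨hy, hyΛ⟩
      have hω : OmegaSet φ x ⊆ Λ := fun y hy =>
        hsubΛ y (omega_subset_nonwandering ⟨hc, h0, hadd⟩ x hy)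
          (omega_subset_closed isClosed_cthickening horb hy)
      have hα : AlphaSet φ x ⊆ Λ := fun y hy =>
        hsubΛ y (alpha_subset_nonwandering ⟨hc, h0, hadd⟩ x hy)
          (alpha_subset_closed isClosed_cthickening horb hy)
      rw [← hsat]
      exact ⟨stable_of_omega_subset hω, unstable_of_alpha_subset hα⟩
    · intro x hx
      refine mem_iInter.mpr fun t => ?_
      have : x ∈ φ t '' Λ := (hinv t).symm ▸ hx
      exact image_mono ((self_subset_thickening hδ Λ).trans
        (thickening_subset_cthickening δ Λ)) this
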